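/- Let r ≥ 2 and a ≥ 3 be integers, and suppose a class α in a cohomology ring satisfies: α^j has additive order r for all j with 1 ≤ j ≤ floor((a−1)/2). If r divides m(N, floor((a−1)/2)) = gcd{C(N,i) : 1 ≤ i ≤ floor((a−1)/2)} for a positive integer N, then n(r, floor((a−1)/2)) divides N, where n(b,s) = ∏_{p | b} p^{v_p(b)+floor(log_p s)}. -/

import Mathlib

/-- If `p` is prime, `N > 0` and `p^e ∣ N`, then `p` does not divide `C(N-1, p^e - 1)`. -/
lemma not_dvd_choose_pred (p : ℕ) (hp : p.Prime) :
    ∀ e N : ℕ, 0 < N → p ^ e ∣ N → ¬ p ∣ Nat.choose (N - 1) (p ^ e - 1) := by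
  intro e
  induction e with
  | zero => intro N hN _; simp; exact fun h => absurd h hp.one_lt.ne'
  | succ e ih =>
    intro N hN hdvd
    obtain ⟨q, hq⟩ : p ∣ N := dvd_trans (dvd_pow_self p (Nat.succ_ne_zero e)) hdvd
    have hq0 : 0 < q := by
      rcases Nat.eq_zero_or_pos q with h | h
      · subst h; simp at hq; omega
      · exact h
    have hp1 : 1 ≤ p := hp.one_lt.le
    -- N - 1 = (p - 1) + p * (q - 1)
    have hN1 : N - 1 = (p - 1) + p * (q - 1) := by
      have : p * q = p * (q - 1) + p := by
        rw [Nat.mul_sub_one]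
        have : p ≤ p * q := Nat.le_mul_of_pos_right p hq0
        omega
      omega
    -- p ^ (e+1) - 1 = (p - 1) + p * (p ^ e - 1)
    have hk1 : p ^ (e + 1) - 1 = (p - 1) + p * (p ^ e - 1) := by
      have hpe : 1 ≤ p ^ e := Nat.one_le_pow _ _ hp.pos
      have h1 : p * (p ^ e - 1) = p * p ^ e - p * 1 := Nat.mul_sub p (p ^ e) 1
      have h2 : p ^ (e + 1) = p * p ^ e := pow_succ' p e
      have h3 : p ≤ p * p ^ e := Nat.le_mul_of_pos_right p (by positivity)
      omega
    have hdivN : (N - 1) / p = q - 1 := by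
      rw [hN1, Nat.add_mul_div_left _ _ hp.pos, Nat.div_eq_of_lt (by omega)]
      omega
    have hmodN : (N - 1) % p = p - 1 := by
      rw [hN1, Nat.add_mul_mod_self_left, Nat.mod_eq_of_lt (by omega)]
    have hdivk : (p ^ (e + 1) - 1) / p = p ^ e - 1 := by
      rw [hk1, Nat.add_mul_div_left _ _ hp.pos, Nat.div_eq_of_lt (by omega)]
      omega
    have hmodk : (p ^ (e + 1) - 1) % p = p - 1 := by
      rw [hk1, Nat.add_mul_mod_self_left, Nat.mod_eq_of_lt (by omega)]
    haveI : Fact p.Prime := ⟨hp⟩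
    have lucas := Choose.choose_modEq_choose_mod_mul_choose_div_nat
      (n := N - 1) (k := p ^ (e + 1) - 1) (p := p)
    rw [hdivN, hmodN, hdivk, hmodk, Nat.choose_self, one_mul] at lucas
    have hqdvd : p ^ e ∣ q := by
      have : p * p ^ e ∣ p * q := by
        rw [← hq, ← pow_succ']
        exact hdvd
      exact (Nat.mul_dvd_mul_iff_left hp.pos).mp this
    have hnot := ih q hq0 hqdvd
    intro hcon
    apply hnot
    have h2 : Nat.choose (N - 1) (p ^ (e + 1) - 1) % p = 0 := Nat.dvd_iff_mod_eq_zero.mp hcon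
    have h3 : Nat.choose (q - 1) (p ^ e - 1) % p = 0 := by
      unfold Nat.ModEq at lucas
      omega
    exact Nat.dvd_iff_mod_eq_zero.mpr h3

/-- Step: if `p^e ∣ N` and `p^k ∣ C(N, p^e)`, then `p^(k+e) ∣ N`. -/
lemma pow_dvd_of_dvd_choose (p : ℕ) (hp : p.Prime) (N k e : ℕ) (hN : 0 < N)
    (he : p ^ e ∣ N) (hc : p ^ k ∣ Nat.choose N (p ^ e)) : p ^ (k + e) ∣ N := by
  have hpe : 1 ≤ p ^ e := Nat.one_le_pow _ _ hp.pos
  have hid : N * Nat.choose (N - 1) (p ^ e - 1) = Nat.choose N (p ^ e) * p ^ e := by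
    have h := Nat.add_one_mul_choose_eq (N - 1) (p ^ e - 1)
    have e1 : N - 1 + 1 = N := by omega
    have e2 : p ^ e - 1 + 1 = p ^ e := by omega
    rw [e1, e2] at h
    exact h
  have hdvd : p ^ (k + e) ∣ N * Nat.choose (N - 1) (p ^ e - 1) := by
    rw [hid, pow_add]
    exact mul_dvd_mul hc dvd_rfl
  have hcop : (p ^ (k + e)).Coprime (Nat.choose (N - 1) (p ^ e - 1)) :=
    Nat.Coprime.pow_left _ (hp.coprime_iff_not_dvd.mpr (not_dvd_choose_pred p hp e N hN he))
  exact hcop.dvd_of_dvd_mul_right hdvd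

lemma prod_pow_dvd (N : ℕ) (S : Finset ℕ) (e : ℕ → ℕ)
    (hprime : ∀ p ∈ S, Nat.Prime p) (hdvd : ∀ p ∈ S, p ^ e p ∣ N) :
    (∏ p ∈ S, p ^ e p) ∣ N := by
  induction S using Finset.induction with
  | empty => simpa using one_dvd N
  | @insert q T hq ih =>
    rw [Finset.prod_insert hq]
    have hqp := hprime q (Finset.mem_insert_self q T)
    have hcop : (q ^ e q).Coprime (∏ p ∈ T, p ^ e p) := by
      apply Nat.Coprime.pow_left
      apply Nat.Coprime.prod_right
      intro p hpT
      exact Nat.Coprime.pow_right _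
        ((Nat.coprime_primes hqp (hprime p (Finset.mem_insert_of_mem hpT))).mpr
          (fun h => hq (h ▸ hpT)))
    exact hcop.mul_dvd_of_dvd_of_dvd (hdvd q (Finset.mem_insert_self q T))
      (ih (fun p hp => hprime p (Finset.mem_insert_of_mem hp))
          (fun p hp => hdvd p (Finset.mem_insert_of_mem hp)))

/-- Arithmetic core of the lower bound on the index in Example 5.8: let `r ≥ 2`, `a ≥ 3`,
and suppose the class `α` (in a cohomology ring `R`) satisfies that `α^j` has additive order
`r` for `1 ≤ j ≤ ⌊(a-1)/2⌋`. If `r` divides `m(N, ⌊(a-1)/2⌋) = gcd {C(N,i)}`, then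
`n(r, ⌊(a-1)/2⌋) = ∏_{p ∣ r prime} p^(v_p r + ⌊log_p ⌊(a-1)/2⌋⌋)` divides `N`. -/
theorem index_lower_bound (r a N : ℕ) (hr : 2 ≤ r) (ha : 3 ≤ a) (hN : 0 < N)
    (R : Type*) [CommRing R] (α : R)
    (hα : ∀ j : ℕ, 1 ≤ j → j ≤ (a - 1) / 2 → addOrderOf (α ^ j) = r)
    (hdvd : r ∣ (Finset.Icc 1 ((a - 1) / 2)).gcd (Nat.choose N)) :
    (∏ p ∈ r.primeFactors, p ^ (r.factorization p + Nat.log p ((a - 1) / 2))) ∣ N := by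
  set s := (a - 1) / 2 with hs
  have hs1 : 1 ≤ s := by omega
  have hchoose : ∀ i, 1 ≤ i → i ≤ s → r ∣ Nat.choose N i := fun i h1 h2 =>
    hdvd.trans (Finset.gcd_dvd (Finset.mem_Icc.mpr ⟨h1, h2⟩))
  apply prod_pow_dvd
  · intro p hp; exact Nat.prime_of_mem_primeFactors hp
  · intro p hp
    have hpp : p.Prime := Nat.prime_of_mem_primeFactors hp
    have hk1 : 1 ≤ r.factorization p := by
      have := Nat.Prime.factorization_pos_of_dvd hpp (by omega) (Nat.dvd_of_mem_primeFactors hp)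
      omega
    have hpk : p ^ r.factorization p ∣ r := Nat.ordProj_dvd r p
    -- induction: p^(k+e) ∣ N for all e ≤ L
    have key : ∀ e, e ≤ Nat.log p s → p ^ (r.factorization p + e) ∣ N := by
      intro e
      induction e with
      | zero =>
        intro _
        have : r ∣ N := by
          have := hchoose 1 le_rfl hs1
          rwa [Nat.choose_one_right] at this
        simpa using hpk.trans this
      | succ e ih =>
        intro he
        have hNe := ih (by omega)
        have hpeN : p ^ (e + 1) ∣ N :=
          dvd_trans (pow_dvd_pow p (by omega)) hNe
        have hle : p ^ (e + 1) ≤ s := by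
          calc p ^ (e + 1) ≤ p ^ Nat.log p s := Nat.pow_le_pow_right hpp.pos he
            _ ≤ s := Nat.pow_log_le_self p (by omega)
        have hrc : r ∣ Nat.choose N (p ^ (e + 1)) :=
          hchoose _ (Nat.one_le_pow _ _ hpp.pos) hle
        have := pow_dvd_of_dvd_choose p hpp N (r.factorization p) (e + 1) hN hpeN
          (hpk.trans hrc)
        simpa [Nat.add_comm, Nat.add_assoc] using this
    exact key _ le_rfl
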